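/- Let (Σ, d) be a metric space with a Borel measure μ satisfying μ(Σ) ≤ L, diam(Σ) ≤ L, and μ(B(y,ρ)) ≤ π·ρ² for every y ∈ Σ and every ρ ∈ (0, 1/4], for some constant L ≥ 1. Let C1 ≥ 0 and let H : Σ × Σ → [0,∞) be measurable with H(x,y) ≤ 1/(2π·d(x,y)) + C1 for all x ≠ y. Then there is a constant C3 depending only on L and C1 such that for every p ∈ [1, 2) and every f ∈ L¹(μ), the function v(x) = ∫_Σ H(x,y)·|f(y)| dμ(y) satisfies ‖v‖_{L^p(μ)} ≤ C3·‖f‖_{L¹(μ)} / (2 − p)^{1/p}. -/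

import Mathlib

open MeasureTheory

section Aux
open Set Real
open scoped ENNReal

lemma sing_int {X : Type} [MetricSpace X] [MeasurableSpace X] [BorelSpace X]
    (μ : Measure X) (L : ℝ) (hL : 1 ≤ L)
    (hμL : μ Set.univ ≤ ENNReal.ofReal L)
    (hball : ∀ y : X, ∀ ρ ∈ Set.Ioc (0:ℝ) (1/4),
      μ (Metric.ball y ρ) ≤ ENNReal.ofReal (Real.pi * ρ^2))
    {p : ℝ} (hp1 : 1 ≤ p) (hp2 : p < 2) (y : X) :
    ∫⁻ x, ENNReal.ofReal ((2 * Real.pi * dist x y)⁻¹ ^ p) ∂μ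
      ≤ ENNReal.ofReal ((L+1)/(2-p)) := by
  have hp0 : 0 < p := lt_of_lt_of_le one_pos hp1
  have h2p : 0 < 2 - p := by linarith
  have hπ := Real.pi_gt_three
  -- measurability of φ
  set φ : X → ℝ := fun x => (2 * Real.pi * dist x y)⁻¹ ^ p with hφ
  have hφm : Measurable φ := by
    have hc : Continuous fun x : X => dist x y := continuous_id.dist continuous_const
    exact (Real.continuous_rpow_const hp0.le).measurable.comp
      (measurable_const.mul hc.measurable).inv
  have hφnn : ∀ x, 0 ≤ φ x := fun x =>
    Real.rpow_nonneg (inv_nonneg.2 (by positivity)) p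
  have hlc := lintegral_eq_lintegral_meas_lt μ
    (Filter.Eventually.of_forall hφnn) hφm.aemeasurable
  rw [hlc]
  -- split (0,∞) = (0,1] ∪ (1,∞)
  have hsplit : (Ioi (0:ℝ)) = Ioc (0:ℝ) 1 ∪ Ioi 1 :=
    (Set.Ioc_union_Ioi_eq_Ioi zero_le_one).symm
  rw [hsplit, lintegral_union measurableSet_Ioi (Set.Ioc_disjoint_Ioi le_rfl)]
  have part1 : ∫⁻ t in Ioc (0:ℝ) 1, μ {a | t < φ a} ≤ ENNReal.ofReal L := by
    calc ∫⁻ t in Ioc (0:ℝ) 1, μ {a | t < φ a}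
        ≤ ∫⁻ _ in Ioc (0:ℝ) 1, ENNReal.ofReal L := by
          refine lintegral_mono fun t => ?_
          exact le_trans (measure_mono (Set.subset_univ _)) hμL
      _ = ENNReal.ofReal L := by
          rw [setLIntegral_const, Real.volume_Ioc]
          simp
  have part2 : ∫⁻ t in Ioi (1:ℝ), μ {a | t < φ a} ≤ ENNReal.ofReal (1/(2-p)) := by
    set e : ℝ := -(2/p) with he_def
    have he : e < -1 := by
      rw [he_def, neg_lt_neg_iff]
      rw [lt_div_iff₀ hp0]; linarith
    have hstep : ∀ t ∈ Ioi (1:ℝ), μ {a | t < φ a}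
        ≤ ENNReal.ofReal ((4*Real.pi)⁻¹ * t ^ e) := by
      intro t ht
      have ht1 : (1:ℝ) < t := ht
      have ht0 : (0:ℝ) < t := lt_trans one_pos ht1
      set r : ℝ := (2*Real.pi)⁻¹ * t ^ (-(1/p)) with hr_def
      have htp : 0 < t ^ (-(1/p)) := Real.rpow_pos_of_pos ht0 _
      have hr0 : 0 < r := by positivity
      have hrle : r ≤ 1/4 := by
        have h1 : t ^ (-(1/p)) ≤ 1 :=
          Real.rpow_le_one_of_one_le_of_nonpos ht1.le (by rw [neg_nonpos]; positivity)
        have h2 : (2*Real.pi)⁻¹ ≤ 1/4 := by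
          rw [show (1:ℝ)/4 = (4:ℝ)⁻¹ by norm_num]
          exact inv_anti₀ (by norm_num) (by nlinarith)
        calc r ≤ (2*Real.pi)⁻¹ * 1 := by
              exact mul_le_mul_of_nonneg_left h1 (by positivity)
          _ ≤ 1/4 := by rw [mul_one]; exact h2
      have hsub : {a | t < φ a} ⊆ Metric.ball y r := by
        intro a ha
        simp only [Set.mem_setOf_eq, hφ] at ha
        have hda : 0 < dist a y := by
          by_contra hd
          push_neg at hd
          have : dist a y = 0 := le_antisymm hd dist_nonneg
          rw [this, mul_zero, inv_zero, Real.zero_rpow hp0.ne'] at ha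
          linarith
        have hb : 0 < (2*Real.pi*dist a y)⁻¹ := by positivity
        have h3 : t ^ (1/p) < (2*Real.pi*dist a y)⁻¹ := by
          have := Real.rpow_lt_rpow ht0.le ha (by positivity : (0:ℝ) < 1/p)
          rwa [← Real.rpow_mul hb.le, mul_one_div, div_self hp0.ne', Real.rpow_one] at this
        have h4 : 2*Real.pi*dist a y < t ^ (-(1/p)) := by
          have htp' : 0 < t ^ (1/p) := Real.rpow_pos_of_pos ht0 _
          have := inv_strictAnti₀ htp' h3
          rwa [inv_inv, ← Real.rpow_neg ht0.le] at this
        have : dist a y < r := by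
          rw [hr_def]
          rw [lt_inv_mul_iff₀ (by positivity : (0:ℝ) < 2*Real.pi)]
          linarith [h4]
        exact this
      have hballle := hball y r ⟨hr0, hrle⟩
      have hval : Real.pi * r^2 = (4*Real.pi)⁻¹ * t ^ e := by
        have hsq : (t ^ (-(1/p)))^2 = t ^ e := by
          rw [← Real.rpow_natCast (t ^ (-(1/p))) 2, ← Real.rpow_mul ht0.le]
          rw [show (-(1/p))*((2:ℕ):ℝ) = e by push_cast; rw [he_def]; ring]
        rw [hr_def, mul_pow, hsq]
        have hπ0 : Real.pi ≠ 0 := by positivity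
        field_simp
        ring
      calc μ {a | t < φ a} ≤ μ (Metric.ball y r) := measure_mono hsub
        _ ≤ ENNReal.ofReal (Real.pi * r^2) := hballle
        _ = ENNReal.ofReal ((4*Real.pi)⁻¹ * t ^ e) := by rw [hval]
    have hint : IntegrableOn (fun t : ℝ => (4*Real.pi)⁻¹ * t ^ e) (Ioi 1) := by
      exact (integrableOn_Ioi_rpow_of_lt he one_pos).const_mul _
    calc ∫⁻ t in Ioi (1:ℝ), μ {a | t < φ a}
        ≤ ∫⁻ t in Ioi (1:ℝ), ENNReal.ofReal ((4*Real.pi)⁻¹ * t ^ e) :=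
          setLIntegral_mono' measurableSet_Ioi hstep
      _ = ENNReal.ofReal (∫ t in Ioi (1:ℝ), (4*Real.pi)⁻¹ * t ^ e) := by
          rw [ofReal_integral_eq_lintegral_ofReal hint]
          filter_upwards [self_mem_ae_restrict (measurableSet_Ioi : MeasurableSet (Ioi (1:ℝ)))] with t ht
          have : (0:ℝ) < t := lt_trans one_pos ht
          positivity
      _ ≤ ENNReal.ofReal (1/(2-p)) := by
          apply ENNReal.ofReal_le_ofReal
          rw [integral_const_mul, integral_Ioi_rpow_of_lt he one_pos]
          rw [Real.one_rpow]
          have hep : e + 1 = (p-2)/p := by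
            rw [he_def]; field_simp; ring
          have hval2 : -1 / (e+1) = p / (2-p) := by
            rw [hep, div_div_eq_mul_div]
            rw [div_eq_div_iff (by intro h; rw [sub_eq_zero] at h; exact absurd h (by linarith)) (by linarith : (2:ℝ) - p ≠ 0)]
            ring
          rw [hval2, ← mul_div_assoc, div_le_div_iff₀ h2p h2p]
          have h4 : (4*Real.pi)⁻¹ ≤ (12:ℝ)⁻¹ := inv_anti₀ (by norm_num) (by nlinarith)
          nlinarith [mul_le_mul h4 hp2.le hp0.le (by norm_num : (0:ℝ) ≤ (12:ℝ)⁻¹)]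
  calc (∫⁻ t in Ioc (0:ℝ) 1, μ {a | t < φ a}) + ∫⁻ t in Ioi (1:ℝ), μ {a | t < φ a}
      ≤ ENNReal.ofReal L + ENNReal.ofReal (1/(2-p)) := add_le_add part1 part2
    _ = ENNReal.ofReal (L + 1/(2-p)) := (ENNReal.ofReal_add (by linarith) (by positivity)).symm
    _ ≤ ENNReal.ofReal ((L+1)/(2-p)) := by
        apply ENNReal.ofReal_le_ofReal
        rw [add_div]
        have : L ≤ L / (2-p) := by
          rw [le_div_iff₀ h2p]; nlinarith
        linarith

lemma singleton_null {X : Type} [MetricSpace X] [MeasurableSpace X] [BorelSpace X]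
    (μ : Measure X) (L : ℝ)
    (hμL : μ Set.univ ≤ ENNReal.ofReal L)
    (hball : ∀ y : X, ∀ ρ ∈ Set.Ioc (0:ℝ) (1/4),
      μ (Metric.ball y ρ) ≤ ENNReal.ofReal (Real.pi * ρ^2))
    (y : X) : μ {y} = 0 := by
  by_contra h
  have hfin : μ {y} < ⊤ :=
    lt_of_le_of_lt (le_trans (measure_mono (Set.subset_univ _)) hμL) ENNReal.ofReal_lt_top
  set ε : ℝ := (μ {y}).toReal with hε
  have hε0 : 0 < ε := ENNReal.toReal_pos h hfin.ne
  set ρ : ℝ := min (1/4) (Real.sqrt (ε / (2 * Real.pi))) with hρ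
  have hπ := Real.pi_gt_three
  have hρ0 : 0 < ρ := lt_min (by norm_num) (Real.sqrt_pos.2 (by positivity))
  have hle := hball y ρ ⟨hρ0, min_le_left _ _⟩
  have hρ2 : Real.pi * ρ^2 ≤ ε/2 := by
    have h1 : ρ ≤ Real.sqrt (ε / (2 * Real.pi)) := min_le_right _ _
    have h2 : ρ^2 ≤ ε / (2 * Real.pi) := by
      rw [← Real.sq_sqrt (by positivity : (0:ℝ) ≤ ε / (2 * Real.pi))]
      exact pow_le_pow_left₀ hρ0.le h1 2
    calc Real.pi * ρ^2 ≤ Real.pi * (ε / (2 * Real.pi)) := by nlinarith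
      _ = ε/2 := by field_simp
  have : μ {y} ≤ ENNReal.ofReal (ε/2) := by
    refine le_trans ?_ (le_trans hle (ENNReal.ofReal_le_ofReal hρ2))
    exact measure_mono (by simp [Metric.mem_ball, hρ0])
  have : ε ≤ ε/2 := by
    have := ENNReal.toReal_mono (by simp) this
    rwa [ENNReal.toReal_ofReal (by positivity)] at this
  linarith

lemma kernel_bound {X : Type} [MetricSpace X] [MeasurableSpace X] [BorelSpace X]
    (μ : Measure X) (L C1 : ℝ) (hL : 1 ≤ L) (hC1 : 0 ≤ C1)
    (hμL : μ Set.univ ≤ ENNReal.ofReal L)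
    (hball : ∀ y : X, ∀ ρ ∈ Set.Ioc (0:ℝ) (1/4),
      μ (Metric.ball y ρ) ≤ ENNReal.ofReal (Real.pi * ρ^2))
    (H : X → X → ℝ)
    (hHnn : ∀ x y : X, 0 ≤ H x y)
    (hHle : ∀ x y : X, x ≠ y → H x y ≤ 1 / (2 * Real.pi * dist x y) + C1)
    {p : ℝ} (hp1 : 1 ≤ p) (hp2 : p < 2) (y : X) :
    ∫⁻ x, ENNReal.ofReal (H x y) ^ p ∂μ
      ≤ ENNReal.ofReal ((2*(L+1) + 2*(1+C1)^2*L)/(2-p)) := by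
  have hp0 : 0 < p := lt_of_lt_of_le one_pos hp1
  have h2p : 0 < 2 - p := by linarith
  have hπ := Real.pi_gt_three
  have hae : ∀ᵐ x ∂μ, ENNReal.ofReal (H x y) ^ p ≤
      2 * (ENNReal.ofReal ((2 * Real.pi * dist x y)⁻¹ ^ p) + ENNReal.ofReal (C1 ^ p)) := by
    have hy : μ {y} = 0 := singleton_null μ L hμL hball y
    rw [ae_iff]
    refine measure_mono_null ?_ hy
    intro x hx
    simp only [Set.mem_setOf_eq, not_le] at hx
    simp only [Set.mem_singleton_iff]
    by_contra hxy
    apply absurd hx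
    push_neg
    have hle := hHle x y hxy
    have hd0 : 0 < dist x y := dist_pos.2 hxy
    calc ENNReal.ofReal (H x y) ^ p
        ≤ (ENNReal.ofReal ((2 * Real.pi * dist x y)⁻¹) + ENNReal.ofReal C1) ^ p := by
          apply ENNReal.rpow_le_rpow ?_ hp0.le
          rw [← ENNReal.ofReal_add (by positivity) hC1]
          apply ENNReal.ofReal_le_ofReal
          rw [← one_div]
          exact hle
      _ ≤ (2:ℝ≥0∞) ^ (p-1) *
            (ENNReal.ofReal ((2 * Real.pi * dist x y)⁻¹) ^ p + ENNReal.ofReal C1 ^ p) :=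
          ENNReal.rpow_add_le_mul_rpow_add_rpow _ _ hp1
      _ ≤ 2 * (ENNReal.ofReal ((2 * Real.pi * dist x y)⁻¹ ^ p) + ENNReal.ofReal (C1 ^ p)) := by
          rw [ENNReal.ofReal_rpow_of_nonneg (by positivity) hp0.le,
            ENNReal.ofReal_rpow_of_nonneg hC1 hp0.le]
          apply mul_le_mul_left
          calc (2:ℝ≥0∞) ^ (p-1) ≤ (2:ℝ≥0∞) ^ (1:ℝ) :=
              ENNReal.rpow_le_rpow_of_exponent_le (by norm_num) (by linarith)
            _ = 2 := ENNReal.rpow_one 2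
  calc ∫⁻ x, ENNReal.ofReal (H x y) ^ p ∂μ
      ≤ ∫⁻ x, 2 * (ENNReal.ofReal ((2 * Real.pi * dist x y)⁻¹ ^ p)
          + ENNReal.ofReal (C1 ^ p)) ∂μ := lintegral_mono_ae hae
    _ = 2 * ((∫⁻ x, ENNReal.ofReal ((2 * Real.pi * dist x y)⁻¹ ^ p) ∂μ)
          + ENNReal.ofReal (C1 ^ p) * μ Set.univ) := by
        rw [lintegral_const_mul' _ _ (by norm_num), lintegral_add_right _ measurable_const,
          lintegral_const]
    _ ≤ 2 * (ENNReal.ofReal ((L+1)/(2-p)) + ENNReal.ofReal (C1 ^ p) * ENNReal.ofReal L) :=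
        mul_le_mul_right (add_le_add (sing_int μ L hL hμL hball hp1 hp2 y)
          (mul_le_mul_right hμL _)) 2
    _ ≤ ENNReal.ofReal ((2*(L+1) + 2*(1+C1)^2*L)/(2-p)) := by
        rw [← ENNReal.ofReal_mul (by positivity), ← ENNReal.ofReal_add (by positivity) (by positivity),
          ← ENNReal.ofReal_ofNat, ← ENNReal.ofReal_mul (by norm_num)]
        apply ENNReal.ofReal_le_ofReal
        have hC1p : C1 ^ p ≤ (1+C1)^2 := by
          calc C1 ^ p ≤ (1+C1) ^ p := Real.rpow_le_rpow hC1 (by linarith) hp0.le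
            _ ≤ (1+C1) ^ (2:ℝ) :=
              Real.rpow_le_rpow_of_exponent_le (by linarith) hp2.le
            _ = (1+C1) ^ (2:ℕ) := by
              rw [← Real.rpow_natCast (1+C1) 2]; norm_num
        have hLL : (1+C1)^2 * L ≤ (1+C1)^2 * L / (2-p) := by
          rw [le_div_iff₀ h2p]
          nlinarith [mul_nonneg (sq_nonneg (1+C1)) (by linarith : (0:ℝ) ≤ L)]
        have hC1pL : C1 ^ p * L ≤ (1+C1)^2 * L / (2-p) := by
          refine le_trans ?_ hLL
          apply mul_le_mul_of_nonneg_right hC1p (by linarith)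
        have hsum : (2*(L+1) + 2*(1+C1)^2*L)/(2-p)
            = 2*((L+1)/(2-p)) + 2*((1+C1)^2*L/(2-p)) := by ring
        rw [hsum, mul_add]
        have h2 : 2*(C1^p*L) ≤ 2*((1+C1)^2*L/(2-p)) := by linarith
        exact add_le_add le_rfl h2

lemma holder_step {X : Type} [MeasurableSpace X] (μ : Measure X) [SFinite μ]
    (G : X → X → ℝ≥0∞) (F : X → ℝ≥0∞)
    (hG : Measurable (fun q : X × X => G q.1 q.2)) (hF : Measurable F)
    (hFt : ∀ y, F y ≠ ⊤) (hFint : ∫⁻ y, F y ∂μ ≠ ⊤)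
    {p : ℝ} (hp1 : 1 ≤ p) :
    ∫⁻ x, (∫⁻ y, G x y * F y ∂μ) ^ p ∂μ
      ≤ (∫⁻ y, F y ∂μ) ^ (p-1) * ∫⁻ y, (∫⁻ x, G x y ^ p ∂μ) * F y ∂μ := by
  have hGy : ∀ x : X, Measurable fun y => G x y :=
    fun x => hG.comp (measurable_prodMk_left)
  have hGx : ∀ y : X, Measurable fun x => G x y :=
    fun y => hG.comp (measurable_id.prodMk measurable_const)
  rcases eq_or_lt_of_le hp1 with rfl | hp
  · simp only [ENNReal.rpow_one, sub_self, ENNReal.rpow_zero, one_mul]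
    have hswap : ∫⁻ x, (∫⁻ y, G x y * F y ∂μ) ∂μ = ∫⁻ y, (∫⁻ x, G x y * F y ∂μ) ∂μ :=
      lintegral_lintegral_swap ((hG.mul (hF.comp measurable_snd)).aemeasurable)
    rw [hswap]
    apply le_of_eq
    refine lintegral_congr fun y => ?_
    rw [lintegral_mul_const' (F y) _ (hFt y)]
  · set q : ℝ := p / (p - 1) with hq
    have hpq : p.HolderConjugate q := Real.HolderConjugate.conjExponent hp
    have hp0 : 0 < p := hpq.pos
    have key : ∀ x, (∫⁻ y, G x y * F y ∂μ)
        ≤ (∫⁻ y, G x y ^ p * F y ∂μ) ^ (1/p) * (∫⁻ y, F y ∂μ) ^ (1/q) := by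
      intro x
      have hf : AEMeasurable (fun y => G x y * F y ^ (1/p)) μ :=
        ((hGy x).mul (hF.pow_const _)).aemeasurable
      have hg : AEMeasurable (fun y => F y ^ (1/q)) μ := (hF.pow_const _).aemeasurable
      have h := ENNReal.lintegral_mul_le_Lp_mul_Lq μ hpq hf hg
      have e1 : ∀ y, (G x y * F y ^ (1/p)) * F y ^ (1/q) = G x y * F y := by
        intro y
        rw [mul_assoc, ← ENNReal.rpow_add_of_nonneg _ _ hpq.one_div_nonneg hpq.symm.one_div_nonneg]
        rw [one_div, one_div, hpq.inv_add_inv_eq_one, ENNReal.rpow_one]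
      have e2 : ∀ y, (G x y * F y ^ (1/p)) ^ p = G x y ^ p * F y := by
        intro y
        rw [ENNReal.mul_rpow_of_nonneg _ _ hp0.le, ← ENNReal.rpow_mul,
          one_div, inv_mul_cancel₀ hp0.ne', ENNReal.rpow_one]
      have e3 : ∀ y, (F y ^ (1/q)) ^ q = F y := by
        intro y
        rw [← ENNReal.rpow_mul, one_div, inv_mul_cancel₀ hpq.symm.ne_zero, ENNReal.rpow_one]
      simp_rw [Pi.mul_apply, e1, e2, e3] at h
      exact h
    calc ∫⁻ x, (∫⁻ y, G x y * F y ∂μ) ^ p ∂μ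
        ≤ ∫⁻ x, ((∫⁻ y, G x y ^ p * F y ∂μ) ^ (1/p) * (∫⁻ y, F y ∂μ) ^ (1/q)) ^ p ∂μ :=
          lintegral_mono fun x => ENNReal.rpow_le_rpow (key x) hp0.le
      _ = ∫⁻ x, (∫⁻ y, G x y ^ p * F y ∂μ) * (∫⁻ y, F y ∂μ) ^ (p-1) ∂μ := by
          refine lintegral_congr fun x => ?_
          rw [ENNReal.mul_rpow_of_nonneg _ _ hp0.le, ← ENNReal.rpow_mul, ← ENNReal.rpow_mul,
            one_div, inv_mul_cancel₀ hp0.ne', ENNReal.rpow_one]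
          congr 1
          rw [show (1/q)*p = p/q by ring, hpq.div_conj_eq_sub_one]
      _ = (∫⁻ x, (∫⁻ y, G x y ^ p * F y ∂μ) ∂μ) * (∫⁻ y, F y ∂μ) ^ (p-1) := by
          rw [lintegral_mul_const' _ _ (ENNReal.rpow_ne_top_of_nonneg (by linarith) hFint)]
      _ = (∫⁻ y, F y ∂μ) ^ (p-1) * ∫⁻ y, (∫⁻ x, G x y ^ p ∂μ) * F y ∂μ := by
          rw [mul_comm]
          congr 1
          rw [lintegral_lintegral_swap]
          · refine lintegral_congr fun y => ?_
            rw [lintegral_mul_const' (F y) _ (hFt y)]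
          · exact ((hG.pow_const p).mul (hF.comp measurable_snd)).aemeasurable

end Aux

section Main
open Set Real
open scoped ENNReal

/-- the `W^{1,p}` estimate (Lemma A.2 of the paper), abstracted
to a metric measure space whose measure satisfies the flat-torus area bounds,
for a non-negative kernel `H` with a `1/d(x,y)` singularity (the gradient of
the Green's function). The constant `C3` depends only on `L` and `C1`. -/
theorem stmt_15 (L C1 : ℝ) (hL : 1 ≤ L) (hC1 : 0 ≤ C1) :
    ∃ C3 : ℝ, ∀ (X : Type) [MetricSpace X] [MeasurableSpace X] [BorelSpace X]
      (μ : Measure X),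
      μ Set.univ ≤ ENNReal.ofReal L →
      Metric.diam (Set.univ : Set X) ≤ L →
      (∀ (y : X), ∀ ρ ∈ Set.Ioc (0 : ℝ) (1 / 4),
        μ (Metric.ball y ρ) ≤ ENNReal.ofReal (Real.pi * ρ ^ 2)) →
      ∀ H : X → X → ℝ, Measurable (fun p : X × X => H p.1 p.2) →
      (∀ x y : X, 0 ≤ H x y) →
      (∀ x y : X, x ≠ y → H x y ≤ 1 / (2 * Real.pi * dist x y) + C1) →
      ∀ p ∈ Set.Ico (1 : ℝ) 2, ∀ f : X → ℝ, Integrable f μ →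
        (∫⁻ x, ENNReal.ofReal (∫ y, H x y * |f y| ∂μ) ^ p ∂μ) ^ (1 / p)
          ≤ ENNReal.ofReal (C3 * (∫ y, |f y| ∂μ) / (2 - p) ^ (1 / p)) := by
  set K : ℝ := 2*(L+1) + 2*(1+C1)^2*L with hK_def
  have hK1 : 1 ≤ K := by nlinarith [sq_nonneg (1+C1)]
  refine ⟨K, ?_⟩
  intro X _ _ _ μ hμL hdiam hball H hHmeas hHnn hHle p hp f hf
  obtain ⟨hp1, hp2⟩ := hp
  have hp0 : 0 < p := lt_of_lt_of_le one_pos hp1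
  have h2p : 0 < 2 - p := by linarith
  haveI : IsFiniteMeasure μ := ⟨lt_of_le_of_lt hμL ENNReal.ofReal_lt_top⟩
  -- measurable representative
  obtain ⟨g, hgm, hfg⟩ : ∃ g : X → ℝ, Measurable g ∧ f =ᵐ[μ] g := by
    refine ⟨hf.1.mk f, hf.1.stronglyMeasurable_mk.measurable, hf.1.ae_eq_mk⟩
  set F : X → ℝ≥0∞ := fun y => ENNReal.ofReal |g y| with hF_def
  set G : X → X → ℝ≥0∞ := fun x y => ENNReal.ofReal (H x y) with hG_def
  have hF : Measurable F := ENNReal.measurable_ofReal.comp hgm.abs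
  have hG : Measurable (fun q : X × X => G q.1 q.2) :=
    ENNReal.measurable_ofReal.comp hHmeas
  have hFt : ∀ y, F y ≠ ⊤ := fun y => ENNReal.ofReal_ne_top
  have habs : (fun y => |f y|) =ᵐ[μ] fun y => |g y| := by
    filter_upwards [hfg] with y hy; rw [hy]
  have hIf : ENNReal.ofReal (∫ y, |f y| ∂μ) = ∫⁻ y, F y ∂μ := by
    rw [ofReal_integral_eq_lintegral_ofReal hf.abs
      (Filter.Eventually.of_forall fun y => abs_nonneg _)]
    exact lintegral_congr_ae (by filter_upwards [habs] with y hy; rw [hy])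
  have hFint : ∫⁻ y, F y ∂μ ≠ ⊤ := by rw [← hIf]; exact ENNReal.ofReal_ne_top
  -- step 0
  have step0 : ∀ x : X, ENNReal.ofReal (∫ y, H x y * |f y| ∂μ) ≤ ∫⁻ y, G x y * F y ∂μ := by
    intro x
    have hmx : Measurable fun y => H x y :=
      hHmeas.comp (measurable_const.prodMk measurable_id)
    have hcong : ∫ y, H x y * |f y| ∂μ = ∫ y, H x y * |g y| ∂μ := by
      refine integral_congr_ae ?_
      filter_upwards [habs] with y hy; rw [hy]
    rw [hcong, integral_eq_lintegral_of_nonneg_ae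
      (Filter.Eventually.of_forall fun y => mul_nonneg (hHnn x y) (abs_nonneg _))
      ((hmx.mul hgm.abs).aestronglyMeasurable)]
    refine le_trans ENNReal.ofReal_toReal_le (le_of_eq ?_)
    refine lintegral_congr fun y => ?_
    rw [ENNReal.ofReal_mul (hHnn x y)]
  -- main chain
  have main : ∫⁻ x, ENNReal.ofReal (∫ y, H x y * |f y| ∂μ) ^ p ∂μ
      ≤ ENNReal.ofReal (K/(2-p)) * (∫⁻ y, F y ∂μ) ^ p := by
    calc ∫⁻ x, ENNReal.ofReal (∫ y, H x y * |f y| ∂μ) ^ p ∂μ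
        ≤ ∫⁻ x, (∫⁻ y, G x y * F y ∂μ) ^ p ∂μ :=
          lintegral_mono fun x => ENNReal.rpow_le_rpow (step0 x) hp0.le
      _ ≤ (∫⁻ y, F y ∂μ) ^ (p-1) * ∫⁻ y, (∫⁻ x, G x y ^ p ∂μ) * F y ∂μ :=
          holder_step μ G F hG hF hFt hFint hp1
      _ ≤ (∫⁻ y, F y ∂μ) ^ (p-1) * ∫⁻ y, ENNReal.ofReal (K/(2-p)) * F y ∂μ := by
          refine mul_le_mul_right (lintegral_mono fun y => ?_) _
          exact mul_le_mul_left
            (kernel_bound μ L C1 hL hC1 hμL hball H hHnn hHle hp1 hp2 y) _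
      _ = ENNReal.ofReal (K/(2-p)) * ((∫⁻ y, F y ∂μ) ^ (p-1) * ∫⁻ y, F y ∂μ) := by
          rw [lintegral_const_mul' _ _ ENNReal.ofReal_ne_top]; ring
      _ = ENNReal.ofReal (K/(2-p)) * (∫⁻ y, F y ∂μ) ^ p := by
          congr 1
          have h := ENNReal.rpow_add_of_nonneg (x := ∫⁻ y, F y ∂μ) (p-1) 1
            (by linarith) zero_le_one
          rw [ENNReal.rpow_one, sub_add_cancel] at h
          exact h.symm
  calc (∫⁻ x, ENNReal.ofReal (∫ y, H x y * |f y| ∂μ) ^ p ∂μ) ^ (1/p)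
      ≤ (ENNReal.ofReal (K/(2-p)) * (∫⁻ y, F y ∂μ) ^ p) ^ (1/p) :=
        ENNReal.rpow_le_rpow main (by positivity)
    _ = ENNReal.ofReal ((K/(2-p)) ^ (1/p)) * ∫⁻ y, F y ∂μ := by
        rw [ENNReal.mul_rpow_of_nonneg _ _ (by positivity), ← ENNReal.rpow_mul,
          mul_one_div, div_self hp0.ne', ENNReal.rpow_one,
          ENNReal.ofReal_rpow_of_nonneg (by positivity) (by positivity)]
    _ ≤ ENNReal.ofReal (K * (∫ y, |f y| ∂μ) / (2 - p) ^ (1 / p)) := by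
        rw [← hIf, ← ENNReal.ofReal_mul (by positivity)]
        apply ENNReal.ofReal_le_ofReal
        have hI0 : 0 ≤ ∫ y, |f y| ∂μ := integral_nonneg fun y => abs_nonneg _
        have hdiv : (K/(2-p)) ^ (1/p) = K ^ (1/p) / (2-p) ^ (1/p) :=
          Real.div_rpow (by linarith) h2p.le _
        have hKp : K ^ (1/p) ≤ K := by
          calc K ^ (1/p) ≤ K ^ (1:ℝ) :=
              Real.rpow_le_rpow_of_exponent_le hK1 (by rw [div_le_one hp0]; linarith)
            _ = K := Real.rpow_one K
        rw [hdiv, div_mul_eq_mul_div]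
        gcongr

end Main
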